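/- Let G₁ and G₂ be finite simple graphs with nonempty disjoint vertex sets. Then ω(G₁ ▽ G₂) = ω(G₁) + ω(G₂) = ω(G₁ ⊻ G₂) and χ(G₁ ▽ G₂) = χ(G₁) + χ(G₂) = χ(G₁ ⊻ G₂), where ▽ denotes the neighbors-splitting join and ⊻ denotes the non-neighbors-splitting join. -/

import Mathlib

open scoped Classical

noncomputable def cliqueNum {V : Type*} [Fintype V] (G : SimpleGraph V) : ℕ :=
  sSup { n : ℕ | ∃ s : Finset V, (∀ i ∈ s, ∀ j ∈ s, i ≠ j → G.Adj i j) ∧ s.card = n }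

/-- The neighbors-splitting (NS) join of `G₁` and `G₂`: vertices are the vertices of
`G₁` (first summand), the primed copies of the vertices of `G₁` (second summand), and
the vertices of `G₂` (third summand). -/
def nsJoin {α β : Type*} (G₁ : SimpleGraph α) (G₂ : SimpleGraph β) :
    SimpleGraph (α ⊕ α ⊕ β) where
  Adj x y :=
    match x, y with
    | .inl u, .inl v => G₁.Adj u v
    | .inl u, .inr (.inl v) => G₁.Adj u v
    | .inr (.inl u), .inl v => G₁.Adj u v
    | .inl _, .inr (.inr _) => True
    | .inr (.inr _), .inl _ => True
    | .inr (.inr b), .inr (.inr c) => G₂.Adj b c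
    | _, _ => False
  symm := by
    constructor
    rintro (u|u|b) (v|v|c) h
    · exact G₁.adj_symm h
    · exact G₁.adj_symm h
    · trivial
    · exact G₁.adj_symm h
    · exact h
    · exact h
    · trivial
    · exact h
    · exact G₂.adj_symm h
  loopless := by
    constructor
    rintro (u|u|b) h
    · exact G₁.irrefl h
    · exact h
    · exact G₂.irrefl h

/-- The non-neighbors-splitting (NNS) join of `G₁` and `G₂`: vertices are the vertices
of `G₁` (first summand), the primed copies of the vertices of `G₁` (second summand),
and the vertices of `G₂` (third summand). -/
def nnsJoin {α β : Type*} (G₁ : SimpleGraph α) (G₂ : SimpleGraph β) :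
    SimpleGraph (α ⊕ α ⊕ β) where
  Adj x y :=
    match x, y with
    | .inl u, .inl v => G₁.Adj u v
    | .inl u, .inr (.inl v) => u ≠ v ∧ ¬ G₁.Adj u v
    | .inr (.inl u), .inl v => u ≠ v ∧ ¬ G₁.Adj u v
    | .inl _, .inr (.inr _) => True
    | .inr (.inr _), .inl _ => True
    | .inr (.inr b), .inr (.inr c) => G₂.Adj b c
    | _, _ => False
  symm := by
    constructor
    rintro (u|u|b) (v|v|c) h
    · exact G₁.adj_symm h
    · obtain ⟨h1, h2⟩ := h; exact ⟨Ne.symm h1, fun a => h2 (G₁.adj_symm a)⟩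
    · trivial
    · obtain ⟨h1, h2⟩ := h; exact ⟨Ne.symm h1, fun a => h2 (G₁.adj_symm a)⟩
    · exact h
    · exact h
    · trivial
    · exact h
    · exact G₂.adj_symm h
  loopless := by
    constructor
    rintro (u|u|b) h
    · exact G₁.irrefl h
    · exact h
    · exact G₂.irrefl h

section Helpers

variable {V : Type*} [Fintype V] (G : SimpleGraph V)

lemma mySet_bddAbove :
    BddAbove { n : ℕ | ∃ s : Finset V, (∀ i ∈ s, ∀ j ∈ s, i ≠ j → G.Adj i j) ∧ s.card = n } :=
  ⟨Fintype.card V, fun _n hn => by obtain ⟨s, _, rfl⟩ := hn; exact s.card_le_univ⟩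

lemma mySet_nonempty :
    Set.Nonempty { n : ℕ | ∃ s : Finset V, (∀ i ∈ s, ∀ j ∈ s, i ≠ j → G.Adj i j) ∧ s.card = n } :=
  ⟨0, ∅, by simp, rfl⟩

lemma le_cliqueNum' {s : Finset V} (hs : ∀ i ∈ s, ∀ j ∈ s, i ≠ j → G.Adj i j) :
    s.card ≤ cliqueNum G :=
  le_csSup (mySet_bddAbove G) ⟨s, hs, rfl⟩

lemma cliqueNum_le' {n : ℕ}
    (h : ∀ s : Finset V, (∀ i ∈ s, ∀ j ∈ s, i ≠ j → G.Adj i j) → s.card ≤ n) :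
    cliqueNum G ≤ n :=
  csSup_le (mySet_nonempty G) (fun _m hm => by obtain ⟨s, hs, rfl⟩ := hm; exact h s hs)

lemma exists_clique_cliqueNum :
    ∃ s : Finset V, (∀ i ∈ s, ∀ j ∈ s, i ≠ j → G.Adj i j) ∧ s.card = cliqueNum G :=
  Nat.sSup_mem (mySet_nonempty G) (mySet_bddAbove G)

lemma one_le_cliqueNum [Nonempty V] : 1 ≤ cliqueNum G := by
  have := le_cliqueNum' G (s := {Classical.arbitrary V}) (by simp)
  simpa using this

end Helpers

open Sum in
lemma clique_join_eq {α β : Type*} [Fintype α] [Fintype β] [Nonempty β]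
    (G₁ : SimpleGraph α) (G₂ : SimpleGraph β) (H : SimpleGraph (α ⊕ α ⊕ β))
    (h11 : ∀ u v, H.Adj (inl u) (inl v) ↔ G₁.Adj u v)
    (h33 : ∀ b c, H.Adj (inr (inr b)) (inr (inr c)) ↔ G₂.Adj b c)
    (h13 : ∀ a b, H.Adj (inl a) (inr (inr b)))
    (h22 : ∀ u v, ¬ H.Adj (inr (inl u)) (inr (inl v)))
    (h23 : ∀ u b, ¬ H.Adj (inr (inl u)) (inr (inr b))) :
    cliqueNum H = cliqueNum G₁ + cliqueNum G₂ := by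
  apply le_antisymm
  · apply cliqueNum_le'
    intro s hs
    have hcard : s.card = s.toLeft.card + (s.toRight.toLeft.card + s.toRight.toRight.card) := by
      rw [Finset.card_toLeft_add_card_toRight, Finset.card_toLeft_add_card_toRight]
    have hs1 : s.toLeft.card ≤ cliqueNum G₁ := by
      apply le_cliqueNum'
      intro i hi j hj hij
      rw [Finset.mem_toLeft] at hi hj
      exact (h11 i j).1 (hs _ hi _ hj (by simp [hij]))
    rcases Finset.eq_empty_or_nonempty s.toRight.toLeft with he | ⟨u, hu⟩
    · have hs2 : s.toRight.toRight.card ≤ cliqueNum G₂ := by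
        apply le_cliqueNum'
        intro i hi j hj hij
        rw [Finset.mem_toRight, Finset.mem_toRight] at hi hj
        exact (h33 i j).1 (hs _ hi _ hj (by simp [hij]))
      rw [hcard, he]
      simpa using Nat.add_le_add hs1 hs2
    · rw [Finset.mem_toLeft, Finset.mem_toRight] at hu
      have h2 : s.toRight.toRight = ∅ := by
        rw [Finset.eq_empty_iff_forall_notMem]
        intro b hb
        rw [Finset.mem_toRight, Finset.mem_toRight] at hb
        exact h23 u b (hs _ hu _ hb (by simp))
      have h1 : s.toRight.toLeft.card ≤ 1 := by
        rw [Finset.card_le_one]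
        intro a ha b hb
        rw [Finset.mem_toLeft, Finset.mem_toRight] at ha hb
        by_contra hab
        exact h22 a b (hs _ ha _ hb (by simp [hab]))
      have hone := one_le_cliqueNum G₂
      have h2' : s.toRight.toRight.card = 0 := by rw [h2]; rfl
      omega
  · obtain ⟨s₁, hs₁, hc₁⟩ := exists_clique_cliqueNum G₁
    obtain ⟨s₂, hs₂, hc₂⟩ := exists_clique_cliqueNum G₂
    have key := le_cliqueNum' H (s := s₁.disjSum ((∅ : Finset α).disjSum s₂)) ?_
    · rwa [Finset.card_disjSum, Finset.card_disjSum, Finset.card_empty, zero_add,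
        hc₁, hc₂] at key
    · rintro (u|u|b) hu (v|v|c) hv hne <;>
        simp only [Finset.inl_mem_disjSum, Finset.inr_mem_disjSum,
          Finset.notMem_empty] at hu hv <;>
        first
        | exact (h11 u v).2 (hs₁ u hu v hv (by simpa using hne))
        | exact h13 u c
        | exact (h13 v b).symm
        | exact (h33 b c).2 (hs₂ b hu c hv (by simpa using hne))

open Sum in
lemma chrom_join_eq {α β : Type*} [Fintype α] [Fintype β] [Nonempty β]
    (G₁ : SimpleGraph α) (G₂ : SimpleGraph β) (H : SimpleGraph (α ⊕ α ⊕ β))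
    (h11 : ∀ u v, G₁.Adj u v → H.Adj (inl u) (inl v))
    (h33 : ∀ b c, G₂.Adj b c → H.Adj (inr (inr b)) (inr (inr c)))
    (h13 : ∀ a b, H.Adj (inl a) (inr (inr b)))
    (hcol : ∀ n₁ n₂ : ℕ, 0 < n₂ → G₁.Colorable n₁ → G₂.Colorable n₂ →
      H.Colorable (n₁ + n₂)) :
    H.chromaticNumber = G₁.chromaticNumber + G₂.chromaticNumber := by
  set n₁ := ENat.toNat G₁.chromaticNumber with hn₁
  set n₂ := ENat.toNat G₂.chromaticNumber with hn₂
  have hc1 : G₁.Colorable n₁ := G₁.colorable_chromaticNumber_of_fintype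
  have hc2 : G₂.Colorable n₂ := G₂.colorable_chromaticNumber_of_fintype
  have he1 : G₁.chromaticNumber = (n₁ : ℕ∞) := by
    rw [hn₁, ENat.coe_toNat]
    rw [SimpleGraph.chromaticNumber_ne_top_iff_exists]
    exact ⟨_, G₁.colorable_of_fintype⟩
  have he2 : G₂.chromaticNumber = (n₂ : ℕ∞) := by
    rw [hn₂, ENat.coe_toNat]
    rw [SimpleGraph.chromaticNumber_ne_top_iff_exists]
    exact ⟨_, G₂.colorable_of_fintype⟩
  have hpos : 0 < n₂ := by
    have := SimpleGraph.chromaticNumber_pos hc2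
    rw [he2] at this
    exact_mod_cast this
  apply le_antisymm
  · rw [he1, he2, ← Nat.cast_add]
    exact (hcol n₁ n₂ hpos hc1 hc2).chromaticNumber_le
  · -- lower bound
    set N := ENat.toNat H.chromaticNumber with hN
    have hcH : H.Colorable N := H.colorable_chromaticNumber_of_fintype
    have heH : H.chromaticNumber = (N : ℕ∞) := by
      rw [hN, ENat.coe_toNat]
      rw [SimpleGraph.chromaticNumber_ne_top_iff_exists]
      exact ⟨_, H.colorable_of_fintype⟩
    obtain ⟨C⟩ := hcH
    set S₁ : Finset (Fin N) := Finset.image (fun a => C (inl a)) Finset.univ with hS₁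
    set S₂ : Finset (Fin N) := Finset.image (fun b => C (inr (inr b))) Finset.univ with hS₂
    have hdisj : Disjoint S₁ S₂ := by
      rw [Finset.disjoint_left]
      intro c hc1' hc2'
      rw [hS₁, Finset.mem_image] at hc1'
      rw [hS₂, Finset.mem_image] at hc2'
      obtain ⟨a, -, ha⟩ := hc1'
      obtain ⟨b, -, hb⟩ := hc2'
      exact C.valid (h13 a b) (ha.trans hb.symm)
    have hcol1 : G₁.Colorable S₁.card := by
      have C' : G₁.Coloring ↥S₁ :=
        SimpleGraph.Coloring.mk
          (fun a => ⟨C (inl a), by rw [hS₁]; exact Finset.mem_image_of_mem _ (Finset.mem_univ a)⟩)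
          (fun {u v} h => by
            simpa [Subtype.ext_iff] using C.valid (h11 u v h))
      simpa using C'.colorable
    have hcol2 : G₂.Colorable S₂.card := by
      have C' : G₂.Coloring ↥S₂ :=
        SimpleGraph.Coloring.mk
          (fun b => ⟨C (inr (inr b)), by
            rw [hS₂]; exact Finset.mem_image_of_mem _ (Finset.mem_univ b)⟩)
          (fun {u v} h => by
            simpa [Subtype.ext_iff] using C.valid (h33 u v h))
      simpa using C'.colorable
    have hle1 : n₁ ≤ S₁.card := by
      have := hcol1.chromaticNumber_le
      rw [he1] at this
      exact_mod_cast this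
    have hle2 : n₂ ≤ S₂.card := by
      have := hcol2.chromaticNumber_le
      rw [he2] at this
      exact_mod_cast this
    have hcards : S₁.card + S₂.card ≤ N := by
      rw [← Finset.card_union_of_disjoint hdisj]
      simpa using Finset.card_le_univ (S₁ ∪ S₂)
    rw [he1, he2, heH, ← Nat.cast_add, Nat.cast_le]
    omega

open Sum in
theorem stmt6 {α β : Type*} [Fintype α] [Fintype β] [Nonempty α] [Nonempty β]
    (G₁ : SimpleGraph α) (G₂ : SimpleGraph β) :
    cliqueNum (nsJoin G₁ G₂) = cliqueNum G₁ + cliqueNum G₂ ∧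
    cliqueNum (nnsJoin G₁ G₂) = cliqueNum G₁ + cliqueNum G₂ ∧
    (nsJoin G₁ G₂).chromaticNumber = G₁.chromaticNumber + G₂.chromaticNumber ∧
    (nnsJoin G₁ G₂).chromaticNumber = G₁.chromaticNumber + G₂.chromaticNumber := by
  refine ⟨?_, ?_, ?_, ?_⟩
  · exact clique_join_eq G₁ G₂ _ (fun _ _ => Iff.rfl) (fun _ _ => Iff.rfl)
      (fun _ _ => trivial) (fun _ _ h => h) (fun _ _ h => h)
  · exact clique_join_eq G₁ G₂ _ (fun _ _ => Iff.rfl) (fun _ _ => Iff.rfl)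
      (fun _ _ => trivial) (fun _ _ h => h) (fun _ _ h => h)
  · refine chrom_join_eq G₁ G₂ _ (fun _ _ h => h) (fun _ _ h => h) (fun _ _ => trivial) ?_
    rintro n₁ n₂ - ⟨C₁⟩ ⟨C₂⟩
    have C : (nsJoin G₁ G₂).Coloring (Fin n₁ ⊕ Fin n₂) :=
      SimpleGraph.Coloring.mk
        (Sum.elim (fun u => inl (C₁ u)) (Sum.elim (fun u => inl (C₁ u)) (fun b => inr (C₂ b))))
        (by
          rintro (u|u|b) (v|v|c) h
          · simpa using C₁.valid h
          · simpa using C₁.valid h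
          · simp
          · simpa using C₁.valid h
          · exact (False.elim h : _)
          · exact (False.elim h : _)
          · simp
          · exact (False.elim h : _)
          · simpa using C₂.valid h)
    have := C.colorable
    simpa using this
  · refine chrom_join_eq G₁ G₂ _ (fun _ _ h => h) (fun _ _ h => h) (fun _ _ => trivial) ?_
    rintro n₁ n₂ hpos ⟨C₁⟩ ⟨C₂⟩
    have C : (nnsJoin G₁ G₂).Coloring (Fin n₁ ⊕ Fin n₂) :=
      SimpleGraph.Coloring.mk
        (Sum.elim (fun u => inl (C₁ u))
          (Sum.elim (fun _ => inr ⟨0, hpos⟩) (fun b => inr (C₂ b))))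
        (by
          rintro (u|u|b) (v|v|c) h
          · simpa using C₁.valid h
          · simp
          · simp
          · simp
          · exact (False.elim h : _)
          · exact (False.elim h : _)
          · simp
          · exact (False.elim h : _)
          · simpa using C₂.valid h)
    have := C.colorable
    simpa using this
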